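/- Let P, K be positive integers, ε > 0, a ∈ ℝ^K, S a P×P Hermitian positive semidefinite complex matrix, and define L(ω) = tr(S Ĉ(ω)^{-1}) + log det Ĉ(ω) where Ĉ(ω) = Σ_{k=1}^K s(a_k) v(ω_k) v(ω_k)^H + ε I. Then for each k, the partial derivative of L with respect to ω_k at ω equals 2 s(a_k) · Im(v(ω_k)^H D E v(ω_k)), where E = Ĉ(ω)^{-1}(Ĉ(ω) − S)Ĉ(ω)^{-1} and D = diag(0, 1, …, P−1). -/

import Mathlib

open Matrix
open scoped ComplexOrder

/-- The rank-one Hermitian matrix `v vᴴ` formed from a vector `v ∈ ℂ^P`. -/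
noncomputable def outer {P : ℕ} (v : Fin P → ℂ) : Matrix (Fin P) (Fin P) ℂ :=
  Matrix.of fun p q => v p * star (v q)

/-- The steering vector `v(ω) ∈ ℂ^P`, `v(ω)_p = e^{iωp}` for `p = 0, …, P−1`. -/
noncomputable def steer (P : ℕ) (ω : ℝ) : Fin P → ℂ :=
  fun p => Complex.exp (Complex.I * (ω : ℂ) * ((p : ℕ) : ℂ))

/-- The softplus function `s(a) = log(1 + e^a)`. -/
noncomputable def softplus (x : ℝ) : ℝ := Real.log (1 + Real.exp x)

/-- The diagonal matrix `D = diag(0, 1, …, P−1)`. -/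
noncomputable def Dmat (P : ℕ) : Matrix (Fin P) (Fin P) ℂ :=
  Matrix.diagonal fun p => ((p : ℕ) : ℂ)

/-- The parameterized covariance `Ĉ(ω) = Σ_k s(a_k) v(ω_k) v(ω_k)ᴴ + ε I`. -/
noncomputable def Chat (P K : ℕ) (ε : ℝ) (a ω : Fin K → ℝ) :
    Matrix (Fin P) (Fin P) ℂ :=
  ∑ k, (softplus (a k) : ℂ) • outer (steer P (ω k)) + (ε : ℂ) • 1

/-- The negative log-likelihood `L(ω) = tr(S Ĉ(ω)⁻¹) + log det Ĉ(ω)` as a function of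
the frequencies, with the amplitudes fixed. -/
noncomputable def nllω (P K : ℕ) (ε : ℝ) (a : Fin K → ℝ) (S : Matrix (Fin P) (Fin P) ℂ)
    (ω : Fin K → ℝ) : ℝ :=
  (Matrix.trace (S * (Chat P K ε a ω)⁻¹)).re + Real.log ((Chat P K ε a ω).det).re

/-! ### Auxiliary lemmas -/

section DetDeriv

/-- The determinant as a continuous multilinear map in the rows. -/
noncomputable def detCM (P : ℕ) :
    ContinuousMultilinearMap ℂ (fun _ : Fin P => (Fin P → ℂ)) ℂ :=
  (Matrix.detRowAlternating : AlternatingMap ℂ (Fin P → ℂ) ℂ (Fin P)).toMultilinearMap.mkContinuous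
    (P.factorial) (by
      intro m
      rw [show (Matrix.detRowAlternating : AlternatingMap ℂ (Fin P → ℂ) ℂ (Fin P)).toMultilinearMap m
            = (Matrix.of m).det from rfl, Matrix.det_apply]
      refine (norm_sum_le _ _).trans ?_
      have hterm : ∀ σ : Equiv.Perm (Fin P),
          ‖Equiv.Perm.sign σ • ∏ i, Matrix.of m (σ i) i‖ ≤ ∏ i, ‖m i‖ := by
        intro σ
        have h1 : ‖Equiv.Perm.sign σ • ∏ i, Matrix.of m (σ i) i‖ = ‖∏ i, m (σ i) i‖ := by
          rcases Int.units_eq_one_or (Equiv.Perm.sign σ) with h | h <;> simp [h, Matrix.of_apply]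
        rw [h1, norm_prod]
        calc ∏ i, ‖m (σ i) i‖ ≤ ∏ i, ‖m (σ i)‖ :=
              Finset.prod_le_prod (fun _ _ => norm_nonneg _)
                (fun i _ => norm_le_pi_norm (m (σ i)) i)
          _ = ∏ i, ‖m i‖ := Equiv.prod_comp σ (fun i => ‖m i‖)
      refine (Finset.sum_le_sum (fun σ _ => hterm σ)).trans ?_
      rw [Finset.sum_const, Finset.card_univ, Fintype.card_perm, nsmul_eq_mul]
      simp)

lemma det_updateRow_eq (P : ℕ) (A : Matrix (Fin P) (Fin P) ℂ) (i : Fin P) (b : Fin P → ℂ) :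
    (A.updateRow i b).det = ∑ j, b j * A.adjugate j i := by
  have h1 : (A.updateRow i b).det = Matrix.cramer Aᵀ b i := by
    rw [Matrix.cramer_apply, Matrix.updateCol_transpose, Matrix.det_transpose]
  have hb : b = ∑ j, b j • (Pi.single j 1 : Fin P → ℂ) := by
    ext q; simp [Pi.single_apply]
  rw [h1]
  conv_lhs => rw [hb]
  rw [map_sum]
  simp only [LinearMap.map_smul, Finset.sum_apply, Pi.smul_apply, smul_eq_mul]
  refine Finset.sum_congr rfl fun j _ => ?_
  rw [Matrix.adjugate_def]
  rfl

lemma sum_det_updateRow (P : ℕ) (A B : Matrix (Fin P) (Fin P) ℂ) :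
    ∑ i, (A.updateRow i (B i)).det = Matrix.trace (A.adjugate * B) := by
  simp only [det_updateRow_eq, Matrix.trace, Matrix.diag, Matrix.mul_apply]
  rw [Finset.sum_comm]
  exact Finset.sum_congr rfl fun i _ => Finset.sum_congr rfl fun j _ => mul_comm _ _

/-- Jacobi's formula along a path. -/
lemma hasDerivAt_det {P : ℕ} {A : ℝ → Matrix (Fin P) (Fin P) ℂ}
    {A' : Matrix (Fin P) (Fin P) ℂ} {t₀ : ℝ}
    (h : ∀ p q, HasDerivAt (fun t => A t p q) (A' p q) t₀) :
    HasDerivAt (fun t => (A t).det) (Matrix.trace ((A t₀).adjugate * A')) t₀ := by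
  have hrows : HasDerivAt (fun t => (fun i => A t i)) (fun i => A' i) t₀ := by
    rw [hasDerivAt_pi]
    intro i
    rw [hasDerivAt_pi]
    intro j
    exact h i j
  have hd := (((detCM P).hasFDerivAt (fun i => A t₀ i)).restrictScalars ℝ).comp_hasDerivAt t₀ hrows
  have : (detCM P).linearDeriv (fun i => A t₀ i) (fun i => A' i)
      = Matrix.trace ((A t₀).adjugate * A') := by
    rw [ContinuousMultilinearMap.linearDeriv_apply, ← sum_det_updateRow]
    exact Finset.sum_congr rfl fun i _ => rfl
  simp [this] at hd
  exact hd

end DetDeriv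

section InvDeriv
variable {P : ℕ}
attribute [local instance] Matrix.linftyOpNormedAddCommGroup Matrix.linftyOpNormedRing
  Matrix.linftyOpNormedSpace Matrix.linftyOpNormedAlgebra Matrix.linftyOpIsBoundedSMul

/-- From entrywise derivatives, assemble a matrix-valued derivative (linfty norm). -/
lemma hasDerivAt_matrix {A : ℝ → Matrix (Fin P) (Fin P) ℂ}
    {A' : Matrix (Fin P) (Fin P) ℂ} {t₀ : ℝ}
    (h : ∀ p q, HasDerivAt (fun t => A t p q) (A' p q) t₀) :
    HasDerivAt A A' t₀ := by
  have key : ∀ t, A t = ∑ p, ∑ q, (A t p q) • Matrix.single p q (1 : ℂ) := by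
    intro t
    conv_lhs => rw [Matrix.matrix_eq_sum_single (A t)]
    simp [Matrix.smul_single]
  have key' : A' = ∑ p, ∑ q, (A' p q) • Matrix.single p q (1 : ℂ) := by
    conv_lhs => rw [Matrix.matrix_eq_sum_single A']
    simp [Matrix.smul_single]
  rw [funext key, key']
  exact HasDerivAt.fun_sum fun p _ => HasDerivAt.fun_sum fun q _ =>
    (h p q).smul_const (Matrix.single p q (1 : ℂ))

lemma hasDerivAt_inv_entry {A : ℝ → Matrix (Fin P) (Fin P) ℂ}
    {A' : Matrix (Fin P) (Fin P) ℂ} {t₀ : ℝ}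
    (h : ∀ p q, HasDerivAt (fun t => A t p q) (A' p q) t₀)
    (hu : IsUnit (A t₀)) (p q : Fin P) :
    HasDerivAt (fun t => (A t)⁻¹ p q) ((-((A t₀)⁻¹ * A' * (A t₀)⁻¹)) p q) t₀ := by
  obtain ⟨u, hu⟩ := hu
  have hA : HasDerivAt A A' t₀ := hasDerivAt_matrix h
  have h1 : HasDerivAt (fun t => Ring.inverse (A t))
      (-((A t₀)⁻¹ * A' * (A t₀)⁻¹)) t₀ := by
    have hf : HasFDerivAt Ring.inverse
        (-((ContinuousLinearMap.mulLeftRight ℝ (Matrix (Fin P) (Fin P) ℂ)) ↑u⁻¹) ↑u⁻¹) (A t₀) :=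
      hu ▸ hasFDerivAt_ringInverse (𝕜 := ℝ) u
    have := hf.comp_hasDerivAt t₀ hA
    have hui : (↑u⁻¹ : Matrix (Fin P) (Fin P) ℂ) = (A t₀)⁻¹ := by
      rw [Matrix.coe_units_inv, hu]
    simp [hui, Function.comp, ContinuousLinearMap.mulLeftRight_apply] at this
    exact this
  have h2 : HasDerivAt (fun t => (A t)⁻¹) (-((A t₀)⁻¹ * A' * (A t₀)⁻¹)) t₀ := by
    simpa [Matrix.nonsing_inv_eq_ringInverse] using h1
  let lm : Matrix (Fin P) (Fin P) ℂ →ₗ[ℝ] ℂ :=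
    { toFun := fun M => M p q, map_add' := fun _ _ => rfl, map_smul' := fun _ _ => rfl }
  have := (LinearMap.toContinuousLinearMap lm).hasFDerivAt.comp_hasDerivAt t₀ h2
  simp at this
  exact this

end InvDeriv

section PosDefFacts

lemma outer_posSemidef {P : ℕ} (v : Fin P → ℂ) : (outer v).PosSemidef := by
  refine Matrix.PosSemidef.of_dotProduct_mulVec_nonneg ?_ ?_
  · ext p q
    show star (v q * star (v p)) = v p * star (v q)
    rw [star_mul', star_star, mul_comm]
  · intro x
    have : star x ⬝ᵥ (outer v *ᵥ x) = star (star v ⬝ᵥ x) * (star v ⬝ᵥ x) := by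
      simp only [dotProduct, Matrix.mulVec, outer, Matrix.of_apply, Pi.star_apply,
        star_sum, star_mul', star_star, Finset.mul_sum, Finset.sum_mul]
      rw [Finset.sum_comm]
      refine Finset.sum_congr rfl fun p _ => Finset.sum_congr rfl fun q _ => ?_
      ring
    rw [this]
    exact star_mul_self_nonneg _
end PosDefFacts

section ChatFacts

lemma smul_posSemidef {P : ℕ} {M : Matrix (Fin P) (Fin P) ℂ} (hM : M.PosSemidef)
    {s : ℝ} (hs : 0 ≤ s) : ((s : ℂ) • M).PosSemidef := by
  refine Matrix.PosSemidef.of_dotProduct_mulVec_nonneg ?_ ?_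
  · show ((s : ℂ) • M)ᴴ = (s : ℂ) • M
    rw [Matrix.conjTranspose_smul, hM.1, Complex.star_def, Complex.conj_ofReal]
  · intro x
    have h1 : star x ⬝ᵥ (((s : ℂ) • M) *ᵥ x) = (s : ℂ) * (star x ⬝ᵥ (M *ᵥ x)) := by
      simp [Matrix.smul_mulVec, dotProduct_smul]
    rw [h1]
    exact mul_nonneg (by exact_mod_cast hs) (hM.dotProduct_mulVec_nonneg x)

lemma softplus_nonneg (x : ℝ) : 0 ≤ softplus x :=
  Real.log_nonneg (by linarith [Real.exp_pos x])

lemma chat_posDef (P K : ℕ) (ε : ℝ) (hε : 0 < ε) (a ω : Fin K → ℝ) :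
    (Chat P K ε a ω).PosDef := by
  unfold Chat
  refine Matrix.PosDef.posSemidef_add ?_ ?_
  · refine Finset.sum_induction _ _ (fun A B hA hB => hA.add hB) Matrix.PosSemidef.zero ?_
    intro j _
    exact smul_posSemidef (outer_posSemidef _) (softplus_nonneg _)
  · have h1 : ((ε : ℂ) • (1 : Matrix (Fin P) (Fin P) ℂ))
        = Matrix.diagonal (fun _ => (ε : ℂ)) := by
      ext p q
      by_cases h : p = q <;> simp [Matrix.one_apply, Matrix.diagonal_apply, h]
    rw [h1]
    exact Matrix.PosDef.diagonal fun _ => by exact_mod_cast hε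

end ChatFacts

section QuadFacts

lemma trace_mul_outer {P : ℕ} (M : Matrix (Fin P) (Fin P) ℂ) (v : Fin P → ℂ) :
    Matrix.trace (M * outer v) = star v ⬝ᵥ (M *ᵥ v) := by
  simp only [Matrix.trace, Matrix.diag, Matrix.mul_apply, outer, Matrix.of_apply,
    dotProduct, Matrix.mulVec, Pi.star_apply, Finset.mul_sum]
  refine Finset.sum_congr rfl fun p _ => Finset.sum_congr rfl fun q _ => ?_
  ring

lemma star_quad {P : ℕ} (M : Matrix (Fin P) (Fin P) ℂ) (v : Fin P → ℂ) :
    star (star v ⬝ᵥ (M *ᵥ v)) = star v ⬝ᵥ (Mᴴ *ᵥ v) := by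
  simp only [dotProduct, Matrix.mulVec, Pi.star_apply, star_sum, star_mul', star_star,
    Matrix.conjTranspose_apply, Finset.mul_sum]
  rw [Finset.sum_comm]
  refine Finset.sum_congr rfl fun p _ => Finset.sum_congr rfl fun q _ => ?_
  ring

end QuadFacts

/-- The partial derivative of `L` with respect to `ω_k` equals
`2 s(a_k) · Im(v(ω_k)ᴴ D E v(ω_k))` with `E = Ĉ⁻¹ (Ĉ − S) Ĉ⁻¹` and
`D = diag(0, 1, …, P−1)`. -/
theorem stmt_10 (P K : ℕ) (hP : 0 < P) (hK : 0 < K) (ε : ℝ) (hε : 0 < ε)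
    (a : Fin K → ℝ) (S : Matrix (Fin P) (Fin P) ℂ) (hS : S.PosSemidef)
    (ω : Fin K → ℝ) (k : Fin K) :
    HasDerivAt (fun t => nllω P K ε a S (Function.update ω k t))
      (2 * softplus (a k) *
        (star (steer P (ω k)) ⬝ᵥ
          ((Dmat P * ((Chat P K ε a ω)⁻¹ * (Chat P K ε a ω - S) * (Chat P K ε a ω)⁻¹)) *ᵥ
            steer P (ω k))).im)
      (ω k) := by
  classical
  set t₀ := ω k with ht₀
  set v : Fin P → ℂ := steer P (ω k) with hv
  set s : ℝ := softplus (a k) with hsdef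
  set C : ℝ → Matrix (Fin P) (Fin P) ℂ := fun t => Chat P K ε a (Function.update ω k t) with hCdef
  set C₀ : Matrix (Fin P) (Fin P) ℂ := Chat P K ε a ω with hC₀def
  have hC₀ : C t₀ = C₀ := by
    simp only [hCdef, ht₀, Function.update_eq_self]
    rfl
  set W : Matrix (Fin P) (Fin P) ℂ := outer v with hW
  set C' : Matrix (Fin P) (Fin P) ℂ :=
    (Complex.I * (s : ℂ)) • (Dmat P * W - W * Dmat P) with hC'
  -- entrywise derivative of C
  have hCd : ∀ p q, HasDerivAt (fun t => C t p q) (C' p q) t₀ := by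
    intro p q
    have hsteer : ∀ (r : Fin P), HasDerivAt (fun t : ℝ => steer P t r)
        (Complex.I * (r : ℂ) * steer P t₀ r) t₀ := by
      intro r
      have h1 : HasDerivAt (fun t : ℝ => (t : ℂ)) 1 t₀ := by
        simpa using (hasDerivAt_id t₀).ofReal_comp
      have h2 : HasDerivAt (fun t : ℝ => Complex.I * (t : ℂ) * ((r : ℕ) : ℂ))
          (Complex.I * ((r : ℕ) : ℂ)) t₀ := by
        simpa [mul_comm, mul_assoc, mul_left_comm] using (h1.const_mul Complex.I).mul_const ((r : ℕ) : ℂ)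
      simpa [steer, mul_comm, mul_assoc, mul_left_comm] using h2.cexp
    have hout : HasDerivAt (fun t => outer (steer P t) p q)
        (Complex.I * ((p : ℕ) : ℂ) * (W p q) - Complex.I * ((q : ℕ) : ℂ) * (W p q)) t₀ := by
      have hp := hsteer p
      have hq := (hsteer q).star
      have := hp.mul hq
      have hWpq : W p q = steer P t₀ p * star (steer P t₀ q) := by
        simp [hW, outer, hv, ht₀]
      simp only [outer, Matrix.of_apply]
      refine this.congr_deriv ?_
      rw [hWpq]
      simp only [star_mul', Complex.star_def, _root_.map_mul, Complex.conj_I, Complex.conj_natCast]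
      ring
    -- C t p q = s * outer(steer t) p q + const
    have hconst : ∀ t, C t p q = (s : ℂ) * outer (steer P t) p q +
        ((∑ j ∈ Finset.univ.erase k, (softplus (a j) : ℂ) • outer (steer P (ω j))
          + (ε : ℂ) • (1 : Matrix (Fin P) (Fin P) ℂ)) p q) := by
      intro t
      simp only [hCdef, Chat]
      rw [← Finset.add_sum_erase _ _ (Finset.mem_univ k)]
      have : ∀ j ∈ Finset.univ.erase k,
          (softplus (a j) : ℂ) • outer (steer P (Function.update ω k t j))
          = (softplus (a j) : ℂ) • outer (steer P (ω j)) := by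
        intro j hj
        rw [Function.update_of_ne (Finset.ne_of_mem_erase hj)]
      rw [Finset.sum_congr rfl this, Function.update_self]
      simp [Matrix.add_apply, Matrix.smul_apply, smul_eq_mul]
      ring
    have hC'pq : C' p q = (s : ℂ) * (Complex.I * ((p : ℕ) : ℂ) * (W p q)
        - Complex.I * ((q : ℕ) : ℂ) * (W p q)) := by
      simp only [hC', Matrix.smul_apply, Matrix.sub_apply, smul_eq_mul, Dmat,
        Matrix.diagonal_mul, Matrix.mul_diagonal]
      ring
    rw [funext hconst, hC'pq]
    exact ((hout.const_mul ((s : ℂ))).add_const _)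
  have hPDC : (C t₀).PosDef := by rw [hC₀]; exact chat_posDef P K ε hε a ω
  have hU : IsUnit (C t₀) := hPDC.isUnit
  have hUdet : IsUnit C₀.det := by
    rw [← hC₀]; exact hPDC.det_pos.ne'.isUnit
  have hInv := hasDerivAt_inv_entry hCd hU
  rw [hC₀] at hInv
  -- trace part
  have hTr : HasDerivAt (fun t => Matrix.trace (S * (C t)⁻¹))
      (Matrix.trace (S * (-(C₀⁻¹ * C' * C₀⁻¹)))) t₀ := by
    have e1 : ∀ M : Matrix (Fin P) (Fin P) ℂ,
        Matrix.trace (S * M) = ∑ p, ∑ q, S p q * M q p := by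
      intro M
      simp only [Matrix.trace, Matrix.diag, Matrix.mul_apply]
    have h := HasDerivAt.fun_sum
      (fun p (_ : p ∈ (Finset.univ : Finset (Fin P))) => HasDerivAt.fun_sum
        (fun q (_ : q ∈ (Finset.univ : Finset (Fin P))) => ((hInv q p).const_mul (S p q))))
    have hfun2 : (fun t => Matrix.trace (S * (C t)⁻¹))
        = fun t => ∑ p, ∑ q, S p q * (C t)⁻¹ q p := funext fun t => e1 _
    rw [hfun2, e1]
    exact h
  have hTrRe : HasDerivAt (fun t => (Matrix.trace (S * (C t)⁻¹)).re)
      ((Matrix.trace (S * (-(C₀⁻¹ * C' * C₀⁻¹)))).re) t₀ := by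
    simpa [Function.comp_def] using Complex.reCLM.hasFDerivAt.comp_hasDerivAt t₀ hTr
  -- det part
  have hDet := hasDerivAt_det hCd
  rw [hC₀] at hDet
  have hDetRe : HasDerivAt (fun t => ((C t).det).re)
      ((Matrix.trace (C₀.adjugate * C')).re) t₀ := by
    simpa [Function.comp_def] using Complex.reCLM.hasFDerivAt.comp_hasDerivAt t₀ hDet
  have hdetpos : 0 < (C₀.det).re ∧ (C₀.det).im = 0 := by
    have := (chat_posDef P K ε hε a ω).det_pos
    rw [← hC₀def] at this
    rw [Complex.lt_def] at this
    simpa using ⟨this.1, this.2.symm⟩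
  have hLog : HasDerivAt (fun t => Real.log ((C t).det).re)
      (((C₀.det).re)⁻¹ * (Matrix.trace (C₀.adjugate * C')).re) t₀ := by
    have := (Real.hasDerivAt_log (by rw [hC₀]; exact hdetpos.1.ne')).comp t₀ hDetRe
    simpa [hC₀, mul_comm, Function.comp_def] using this
  have hSum := hTrRe.add hLog
  have hfun : (fun t => nllω P K ε a S (Function.update ω k t))
      = fun t => (Matrix.trace (S * (C t)⁻¹)).re + Real.log ((C t).det).re := rfl
  rw [hfun]
  refine hSum.congr_deriv ?_
  -- now the value identity
  set E : Matrix (Fin P) (Fin P) ℂ := C₀⁻¹ * (C₀ - S) * C₀⁻¹ with hE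
  -- adjugate = det • inverse
  have hadj : C₀.adjugate = C₀.det • C₀⁻¹ := by
    rw [Matrix.inv_def, smul_smul, Ring.mul_inverse_cancel _ hUdet, one_smul]
  have htr2 : Matrix.trace (C₀.adjugate * C') = C₀.det * Matrix.trace (C₀⁻¹ * C') := by
    rw [hadj, Matrix.smul_mul, Matrix.trace_smul, smul_eq_mul]
  have hterm2 : ((C₀.det).re)⁻¹ * (Matrix.trace (C₀.adjugate * C')).re
      = (Matrix.trace (C₀⁻¹ * C')).re := by
    rw [htr2, Complex.mul_re, hdetpos.2, zero_mul, sub_zero, ← mul_assoc,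
      inv_mul_cancel₀ hdetpos.1.ne', one_mul]
  rw [hterm2]
  -- combine traces
  have hmulinv : C₀⁻¹ * C₀ = 1 := Matrix.nonsing_inv_mul C₀ hUdet
  have hEeq : E = C₀⁻¹ - C₀⁻¹ * S * C₀⁻¹ := by
    rw [hE, Matrix.mul_sub, Matrix.sub_mul, hmulinv, Matrix.one_mul]
  have hcyc : Matrix.trace (S * (-(C₀⁻¹ * C' * C₀⁻¹)))
      = -Matrix.trace ((C₀⁻¹ * S * C₀⁻¹) * C') := by
    rw [Matrix.mul_neg, Matrix.trace_neg, neg_inj]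
    rw [show S * (C₀⁻¹ * C' * C₀⁻¹) = (S * (C₀⁻¹ * C')) * C₀⁻¹ by
      simp only [Matrix.mul_assoc]]
    rw [Matrix.trace_mul_comm]
    congr 1
    simp only [Matrix.mul_assoc]
  have hcomb : (Matrix.trace (S * (-(C₀⁻¹ * C' * C₀⁻¹)))).re + (Matrix.trace (C₀⁻¹ * C')).re
      = (Matrix.trace (E * C')).re := by
    rw [hcyc, hEeq, Matrix.sub_mul, Matrix.trace_sub]
    simp [Complex.sub_re, Complex.neg_re]
    ring
  rw [eq_comm, hcomb]
  -- Hermitian bookkeeping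
  have hC₀H : C₀.IsHermitian := (chat_posDef P K ε hε a ω).isHermitian
  have hC₀invH : (C₀⁻¹).IsHermitian := hC₀H.inv
  have hDH : (Dmat P)ᴴ = Dmat P := by
    ext p q
    by_cases h : p = q
    · simp [Dmat, Matrix.conjTranspose_apply, Matrix.diagonal_apply, h]
    · simp [Dmat, Matrix.conjTranspose_apply, Matrix.diagonal_apply, h, Ne.symm h]
  have hEH : Eᴴ = E := by
    rw [hE]
    rw [Matrix.conjTranspose_mul, Matrix.conjTranspose_mul, Matrix.conjTranspose_sub]
    rw [hC₀invH, hC₀H, hS.1]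
    rw [Matrix.mul_assoc]
  -- expand trace (E * C')
  set z : ℂ := star v ⬝ᵥ ((Dmat P * E) *ᵥ v) with hz
  have h1 : Matrix.trace (E * (Dmat P * W)) = star v ⬝ᵥ ((E * Dmat P) *ᵥ v) := by
    rw [← Matrix.mul_assoc, trace_mul_outer]
  have h2 : Matrix.trace (E * (W * Dmat P)) = z := by
    rw [← Matrix.mul_assoc, Matrix.trace_mul_comm, ← Matrix.mul_assoc, trace_mul_outer]
  have h3 : star v ⬝ᵥ ((E * Dmat P) *ᵥ v) = star z := by
    rw [hz, star_quad, Matrix.conjTranspose_mul, hDH, hEH]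
  have htrE : Matrix.trace (E * C') = (Complex.I * (s : ℂ)) * (star z - z) := by
    rw [hC', Matrix.mul_smul, Matrix.trace_smul, Matrix.mul_sub, Matrix.trace_sub,
      h1, h2, h3]
    simp [smul_eq_mul]
  rw [htrE]
  -- final scalar computation
  have : z = star v ⬝ᵥ ((Dmat P * (C₀⁻¹ * (C₀ - S) * C₀⁻¹)) *ᵥ v) := by rw [hz, hE]
  rw [show (2 : ℝ) * s * (star v ⬝ᵥ ((Dmat P * (C₀⁻¹ * (C₀ - S) * C₀⁻¹)) *ᵥ v)).im
      = 2 * s * z.im by rw [this]]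
  simp [Complex.mul_re, Complex.mul_im, Complex.sub_re, Complex.sub_im,
    Complex.conj_re, Complex.conj_im]
  ring
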